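/- arXiv:2205.08442 — 2 statements merged into one kernel-verified Lean document; each statement's English description precedes it below -/
import Mathlib

section
/- For matrices X, Y ∈ R^{n×p}, the Frobenius inner product satisfies ⟨X, Y⟩ ≤ ⟨σ(X), σ(Y)⟩, where σ(·) denotes the vector of singular values in nonincreasing order (von Neumann's trace inequality). -/
open Matrix

noncomputable def nuclearNorm {m n : Type*} [Fintype m] [Fintype n] [DecidableEq n]
    (A : Matrix m n ℝ) : ℝ :=
  ((Matrix.posSemidef_conjTranspose_mul_self A).1.eigenvectorUnitary.1 *
    diagonal ((RCLike.ofReal : ℝ → ℝ) ∘ Real.sqrt ∘ (Matrix.posSemidef_conjTranspose_mul_self A).1.eigenvalues) *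
    (star (Matrix.posSemidef_conjTranspose_mul_self A).1.eigenvectorUnitary : Matrix n n ℝ)).trace

noncomputable def opNorm {m n : Type*} [Fintype m] [Fintype n] [DecidableEq m] [DecidableEq n]
    (A : Matrix m n ℝ) : ℝ :=
  ‖(LinearMap.toContinuousLinearMap
      (Matrix.toEuclideanLin A : EuclideanSpace ℝ n →ₗ[ℝ] EuclideanSpace ℝ m))‖

def finner {m n : Type*} [Fintype m] [Fintype n] (A B : Matrix m n ℝ) : ℝ :=
  (Aᵀ * B).trace

noncomputable def nuclearSubdiff {m n : Type*} [Fintype m] [Fintype n] [DecidableEq n]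
    (X : Matrix m n ℝ) : Set (Matrix m n ℝ) :=
  {Y | ∀ Z, nuclearNorm X + finner Y (Z - X) ≤ nuclearNorm Z}

def rectDiag (n p : ℕ) (s : Fin p → ℝ) : Matrix (Fin n) (Fin p) ℝ :=
  Matrix.of fun i j => if (i : ℕ) = (j : ℕ) then s j else 0

def blockIR (n p r : ℕ) (R : Matrix (Fin (n - r)) (Fin (p - r)) ℝ) :
    Matrix (Fin n) (Fin p) ℝ :=
  Matrix.of fun i j =>
    if h : (i : ℕ) < r ∨ (j : ℕ) < r then (if (i : ℕ) = (j : ℕ) then 1 else 0)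
    else R ⟨i - r, by have := i.isLt; omega⟩ ⟨j - r, by have := j.isLt; omega⟩


lemma vn_tel (p : ℕ) (s : ℕ → ℝ) (hsp : s p = 0) {m : ℕ} (hm : m ≤ p) :
    ∑ k ∈ Finset.Ico m p, (s k - s (k+1)) = s m := by
  rw [Finset.sum_Ico_eq_sub _ hm, Finset.sum_range_sub' s, Finset.sum_range_sub' s, hsp]
  ring

lemma vn_swap (p : ℕ) (f : ℕ → ℕ → ℝ) :
    ∑ i ∈ Finset.range p, ∑ k ∈ Finset.Ico i p, f i k
      = ∑ k ∈ Finset.range p, ∑ i ∈ Finset.range (k+1), f i k := by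
  refine Finset.sum_comm' ?_
  intro i k; simp only [Finset.mem_range, Finset.mem_Ico]; omega

lemma vn_expand (p : ℕ) (D : ℕ → ℕ → ℝ) (s t : ℕ → ℝ) (hsp : s p = 0) (htp : t p = 0) :
    ∑ i ∈ Finset.range p, ∑ j ∈ Finset.range p, D i j * s i * t j
      = ∑ k ∈ Finset.range p, ∑ l ∈ Finset.range p,
          (s k - s (k+1)) * (t l - t (l+1)) *
            (∑ i ∈ Finset.range (k+1), ∑ j ∈ Finset.range (l+1), D i j) := by
  have key : ∀ i ∈ Finset.range p, ∀ j ∈ Finset.range p,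
      D i j * s i * t j
        = ∑ k ∈ Finset.Ico i p, ∑ l ∈ Finset.Ico j p,
            (s k - s (k+1)) * (t l - t (l+1)) * D i j := by
    intro i hi j hj
    have e : (∑ k ∈ Finset.Ico i p, (s k - s (k+1)))
          * (∑ l ∈ Finset.Ico j p, (t l - t (l+1))) * D i j
        = D i j * s i * t j := by
      rw [vn_tel p s hsp (Finset.mem_range.mp hi).le,
          vn_tel p t htp (Finset.mem_range.mp hj).le]
      ring
    rw [← e, Finset.sum_mul_sum, Finset.sum_mul]
    exact Finset.sum_congr rfl fun k _ => by rw [Finset.sum_mul]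
  calc ∑ i ∈ Finset.range p, ∑ j ∈ Finset.range p, D i j * s i * t j
      = ∑ i ∈ Finset.range p, ∑ j ∈ Finset.range p, ∑ k ∈ Finset.Ico i p,
          ∑ l ∈ Finset.Ico j p, (s k - s (k+1)) * (t l - t (l+1)) * D i j :=
        Finset.sum_congr rfl fun i hi => Finset.sum_congr rfl fun j hj => key i hi j hj
    _ = ∑ i ∈ Finset.range p, ∑ k ∈ Finset.Ico i p, ∑ j ∈ Finset.range p,
          ∑ l ∈ Finset.Ico j p, (s k - s (k+1)) * (t l - t (l+1)) * D i j :=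
        Finset.sum_congr rfl fun i _ => Finset.sum_comm
    _ = ∑ k ∈ Finset.range p, ∑ i ∈ Finset.range (k+1), ∑ j ∈ Finset.range p,
          ∑ l ∈ Finset.Ico j p, (s k - s (k+1)) * (t l - t (l+1)) * D i j :=
        vn_swap p _
    _ = ∑ k ∈ Finset.range p, ∑ i ∈ Finset.range (k+1), ∑ l ∈ Finset.range p,
          ∑ j ∈ Finset.range (l+1), (s k - s (k+1)) * (t l - t (l+1)) * D i j := by
        refine Finset.sum_congr rfl fun k _ => Finset.sum_congr rfl fun i _ => ?_
        refine Finset.sum_comm' ?_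
        intro j l; simp only [Finset.mem_range, Finset.mem_Ico]; omega
    _ = ∑ k ∈ Finset.range p, ∑ l ∈ Finset.range p, ∑ i ∈ Finset.range (k+1),
          ∑ j ∈ Finset.range (l+1), (s k - s (k+1)) * (t l - t (l+1)) * D i j :=
        Finset.sum_congr rfl fun k _ => Finset.sum_comm
    _ = _ := by
        refine Finset.sum_congr rfl fun k _ => Finset.sum_congr rfl fun l _ => ?_
        simp only [Finset.mul_sum]

lemma vn_substoch (p : ℕ) (D : ℕ → ℕ → ℝ) (s t : ℕ → ℝ)
    (hD0 : ∀ i j, 0 ≤ D i j)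
    (hrow : ∀ i, ∑ j ∈ Finset.range p, D i j ≤ 1)
    (hcol : ∀ j, ∑ i ∈ Finset.range p, D i j ≤ 1)
    (hs : ∀ k, s (k+1) ≤ s k) (hsp : s p = 0)
    (ht : ∀ k, t (k+1) ≤ t k) (htp : t p = 0) :
    ∑ i ∈ Finset.range p, ∑ j ∈ Finset.range p, D i j * s i * t j
      ≤ ∑ i ∈ Finset.range p, s i * t i := by
  have hRHS : ∑ i ∈ Finset.range p, s i * t i
      = ∑ k ∈ Finset.range p, ∑ l ∈ Finset.range p,
          (s k - s (k+1)) * (t l - t (l+1)) * ((min (k+1) (l+1) : ℕ) : ℝ) := by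
    have h1 : ∑ i ∈ Finset.range p, s i * t i
        = ∑ i ∈ Finset.range p, ∑ j ∈ Finset.range p,
            (if i = j then (1:ℝ) else 0) * s i * t j := by
      refine Finset.sum_congr rfl fun i hi => ?_
      simp [ite_mul, Finset.sum_ite_eq, Finset.mem_range.mp hi]
    rw [h1, vn_expand p (fun i j => if i = j then (1:ℝ) else 0) s t hsp htp]
    refine Finset.sum_congr rfl fun k hk => Finset.sum_congr rfl fun l hl => ?_
    congr 1
    calc ∑ i ∈ Finset.range (k+1), ∑ j ∈ Finset.range (l+1), (if i = j then (1:ℝ) else 0)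
        = ∑ i ∈ Finset.range (k+1), (if i ∈ Finset.range (l+1) then (1:ℝ) else 0) := by
          refine Finset.sum_congr rfl fun i _ => ?_
          simp [Finset.sum_ite_eq]
      _ = (((Finset.range (k+1)).filter (· ∈ Finset.range (l+1))).card : ℝ) := by
          rw [Finset.sum_boole]
      _ = _ := by
          congr 1
          rw [show (Finset.range (k+1)).filter (· ∈ Finset.range (l+1))
              = Finset.range (min (k+1) (l+1)) by ext x; simp only [Finset.mem_filter, Finset.mem_range]; omega, Finset.card_range]
  rw [vn_expand p D s t hsp htp, hRHS]
  refine Finset.sum_le_sum fun k hk => Finset.sum_le_sum fun l hl => ?_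
  have hδ : (0:ℝ) ≤ (s k - s (k+1)) * (t l - t (l+1)) :=
    mul_nonneg (by linarith [hs k]) (by linarith [ht l])
  refine mul_le_mul_of_nonneg_left ?_ hδ
  rw [Nat.cast_min]
  refine le_min ?_ ?_
  · calc ∑ i ∈ Finset.range (k+1), ∑ j ∈ Finset.range (l+1), D i j
        ≤ ∑ i ∈ Finset.range (k+1), (1:ℝ) := by
          refine Finset.sum_le_sum fun i _ => ?_
          calc ∑ j ∈ Finset.range (l+1), D i j
              ≤ ∑ j ∈ Finset.range p, D i j :=
                Finset.sum_le_sum_of_subset_of_nonneg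
                  (Finset.range_subset_range.mpr (Finset.mem_range.mp hl))
                  (fun j _ _ => hD0 i j)
            _ ≤ 1 := hrow i
      _ = ((k+1 : ℕ) : ℝ) := by simp
  · calc ∑ i ∈ Finset.range (k+1), ∑ j ∈ Finset.range (l+1), D i j
        = ∑ j ∈ Finset.range (l+1), ∑ i ∈ Finset.range (k+1), D i j := Finset.sum_comm
      _ ≤ ∑ j ∈ Finset.range (l+1), (1:ℝ) := by
          refine Finset.sum_le_sum fun j _ => ?_
          calc ∑ i ∈ Finset.range (k+1), D i j
              ≤ ∑ i ∈ Finset.range p, D i j :=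
                Finset.sum_le_sum_of_subset_of_nonneg
                  (Finset.range_subset_range.mpr (Finset.mem_range.mp hk))
                  (fun i _ _ => hD0 i j)
            _ ≤ 1 := hcol j
      _ = ((l+1 : ℕ) : ℝ) := by simp

theorem vonNeumann_trace_inequality {n p : ℕ} (hpn : p ≤ n)
    (X Y : Matrix (Fin n) (Fin p) ℝ)
    (U₁ U₂ : Matrix (Fin n) (Fin n) ℝ) (V₁ V₂ : Matrix (Fin p) (Fin p) ℝ)
    (hU₁ : U₁ᵀ * U₁ = 1) (hU₂ : U₂ᵀ * U₂ = 1) (hV₁ : V₁ᵀ * V₁ = 1) (hV₂ : V₂ᵀ * V₂ = 1)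
    (s t : Fin p → ℝ) (hs : Antitone s) (ht : Antitone t)
    (hs0 : ∀ j, 0 ≤ s j) (ht0 : ∀ j, 0 ≤ t j)
    (hX : X = U₁ * rectDiag n p s * V₁ᵀ) (hY : Y = U₂ * rectDiag n p t * V₂ᵀ) :
    finner X Y ≤ ∑ j, s j * t j := by
  classical
  have hU₁' : U₁ * U₁ᵀ = 1 := mul_eq_one_comm.mp hU₁
  have hU₂' : U₂ * U₂ᵀ = 1 := mul_eq_one_comm.mp hU₂
  have hV₁' : V₁ * V₁ᵀ = 1 := mul_eq_one_comm.mp hV₁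
  have hV₂' : V₂ * V₂ᵀ = 1 := mul_eq_one_comm.mp hV₂
  set Q : Matrix (Fin n) (Fin n) ℝ := U₁ᵀ * U₂ with hQdef
  set P : Matrix (Fin p) (Fin p) ℝ := V₂ᵀ * V₁ with hPdef
  have hQ1 : Qᵀ * Q = 1 := by
    rw [hQdef, Matrix.transpose_mul, Matrix.transpose_transpose,
        Matrix.mul_assoc, ← Matrix.mul_assoc U₁, hU₁', Matrix.one_mul, hU₂]
  have hQ2 : Q * Qᵀ = 1 := mul_eq_one_comm.mp hQ1
  have hP1 : Pᵀ * P = 1 := by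
    rw [hPdef, Matrix.transpose_mul, Matrix.transpose_transpose,
        Matrix.mul_assoc, ← Matrix.mul_assoc V₂, hV₂', Matrix.one_mul, hV₁]
  have hP2 : P * Pᵀ = 1 := mul_eq_one_comm.mp hP1
  -- orthonormality of rows and columns
  have hQc : ∀ b, ∑ a, Q a b ^ 2 = 1 := fun b => by
    have h := congrFun (congrFun hQ1 b) b
    simpa [Matrix.mul_apply, Matrix.one_apply, pow_two] using h
  have hQr : ∀ a, ∑ b, Q a b ^ 2 = 1 := fun a => by
    have h := congrFun (congrFun hQ2 a) a
    simpa [Matrix.mul_apply, Matrix.one_apply, pow_two] using h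
  have hPc : ∀ b, ∑ a, P a b ^ 2 = 1 := fun b => by
    have h := congrFun (congrFun hP1 b) b
    simpa [Matrix.mul_apply, Matrix.one_apply, pow_two] using h
  have hPr : ∀ a, ∑ b, P a b ^ 2 = 1 := fun a => by
    have h := congrFun (congrFun hP2 a) a
    simpa [Matrix.mul_apply, Matrix.one_apply, pow_two] using h
  have hsub : ∀ (F : Fin n → ℝ), (∀ b, 0 ≤ F b) → (∑ b, F b = 1) →
      ∑ c : Fin p, F (Fin.castLE hpn c) ≤ 1 := by
    intro F hF h1
    calc ∑ c : Fin p, F (Fin.castLE hpn c)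
        = ∑ b ∈ Finset.univ.map (Fin.castLEEmb hpn), F b := by rw [Finset.sum_map]; rfl
      _ ≤ ∑ b, F b := Finset.sum_le_sum_of_subset_of_nonneg (Finset.subset_univ _)
          (fun b _ _ => hF b)
      _ = 1 := h1
  -- the correlation matrix
  set M : Fin p → Fin p → ℝ :=
    fun i j => Q (Fin.castLE hpn i) (Fin.castLE hpn j) * P j i with hMdef
  -- trace identity
  have hDs : ∀ (u : Fin p → ℝ) (j : Fin p) (a : Fin n),
      rectDiag n p u a j = if a = Fin.castLE hpn j then u j else 0 := by
    intro u j a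
    simp only [rectDiag, Matrix.of_apply]
    refine if_congr ?_ rfl rfl
    rw [Fin.ext_iff]
    simp
  have hA : ∀ (j : Fin p) (b : Fin n),
      ((rectDiag n p s)ᵀ * Q) j b = s j * Q (Fin.castLE hpn j) b := by
    intro j b
    rw [Matrix.mul_apply]
    simp [Matrix.transpose_apply, hDs, ite_mul, zero_mul, Finset.sum_ite_eq']
  have hBmat : (rectDiag n p s)ᵀ * Q * rectDiag n p t
      = Matrix.of (fun j c =>
          s j * Q (Fin.castLE hpn j) (Fin.castLE hpn c) * t c) := by
    ext j c
    rw [Matrix.mul_apply]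
    simp [hA, hDs, mul_ite, mul_zero, Finset.sum_ite_eq']
  have htrace : finner X Y
      = Matrix.trace ((rectDiag n p s)ᵀ * Q * rectDiag n p t * P) := by
    unfold finner
    rw [hX, hY]
    rw [show (U₁ * rectDiag n p s * V₁ᵀ)ᵀ * (U₂ * rectDiag n p t * V₂ᵀ)
        = V₁ * ((rectDiag n p s)ᵀ * Q * (rectDiag n p t * V₂ᵀ)) from by
      simp [Matrix.transpose_mul, Matrix.mul_assoc, hQdef]]
    rw [Matrix.trace_mul_comm]
    congr 1
    simp [Matrix.mul_assoc, hPdef]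
  have hfin : finner X Y = ∑ j : Fin p, ∑ c : Fin p, s j * t c * M j c := by
    rw [htrace, hBmat]
    simp only [Matrix.trace, Matrix.diag_apply, Matrix.mul_apply, Matrix.of_apply, hMdef]
    exact Finset.sum_congr rfl fun j _ => Finset.sum_congr rfl fun c _ => by ring
  -- row and column bounds on |M|
  have sqrtmul : ∀ a b : ℝ, a ≤ 1 → b ≤ 1 → Real.sqrt a * Real.sqrt b ≤ 1 := by
    intro a b ha hb
    have h1 := Real.sqrt_le_one.mpr ha
    have h2 := Real.sqrt_le_one.mpr hb
    have h3 := Real.sqrt_nonneg a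
    nlinarith [Real.sqrt_nonneg b]
  have hMrow : ∀ i : Fin p, ∑ c : Fin p, |M i c| ≤ 1 := by
    intro i
    have cs := Real.sum_mul_le_sqrt_mul_sqrt Finset.univ
        (fun c : Fin p => |Q (Fin.castLE hpn i) (Fin.castLE hpn c)|) (fun c => |P c i|)
    simp only [← abs_mul, sq_abs] at cs
    refine le_trans (le_of_le_of_eq ?_ rfl) (le_trans cs (sqrtmul _ _ ?_ ?_))
    · exact le_of_eq (Finset.sum_congr rfl fun c _ => rfl)
    · exact hsub (fun b => Q (Fin.castLE hpn i) b ^ 2) (fun b => sq_nonneg _)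
        (hQr (Fin.castLE hpn i))
    · exact le_of_eq (hPc i)
  have hMcol : ∀ c : Fin p, ∑ i : Fin p, |M i c| ≤ 1 := by
    intro c
    have cs := Real.sum_mul_le_sqrt_mul_sqrt Finset.univ
        (fun i : Fin p => |Q (Fin.castLE hpn i) (Fin.castLE hpn c)|) (fun i => |P c i|)
    simp only [← abs_mul, sq_abs] at cs
    refine le_trans (le_of_le_of_eq ?_ rfl) (le_trans cs (sqrtmul _ _ ?_ ?_))
    · exact le_of_eq (Finset.sum_congr rfl fun i _ => rfl)
    · exact hsub (fun b => Q b (Fin.castLE hpn c) ^ 2) (fun b => sq_nonneg _)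
        (hQc (Fin.castLE hpn c))
    · exact le_of_eq (hPr c)
  -- transfer to ℕ-indexed data
  set D : ℕ → ℕ → ℝ :=
    fun i j => if h : i < p ∧ j < p then |M ⟨i, h.1⟩ ⟨j, h.2⟩| else 0 with hDdef
  set s' : ℕ → ℝ := fun k => if h : k < p then s ⟨k, h⟩ else 0 with hs'def
  set t' : ℕ → ℝ := fun k => if h : k < p then t ⟨k, h⟩ else 0 with ht'def
  have hD0 : ∀ i j, 0 ≤ D i j := by
    intro i j; rw [hDdef]; dsimp only; split
    · exact abs_nonneg _
    · exact le_refl 0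
  have hDrow : ∀ i, ∑ j ∈ Finset.range p, D i j ≤ 1 := by
    intro i
    by_cases hi : i < p
    · rw [← Fin.sum_univ_eq_sum_range (fun j => D i j) p]
      refine le_trans (le_of_eq (Finset.sum_congr rfl fun j _ => ?_)) (hMrow ⟨i, hi⟩)
      simp [hDdef, hi, j.isLt]
    · refine le_trans (le_of_eq (Finset.sum_eq_zero fun j hj => ?_)) zero_le_one
      simp [hDdef, hi]
  have hDcol : ∀ j, ∑ i ∈ Finset.range p, D i j ≤ 1 := by
    intro j
    by_cases hj : j < p
    · rw [← Fin.sum_univ_eq_sum_range (fun i => D i j) p]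
      refine le_trans (le_of_eq (Finset.sum_congr rfl fun i _ => ?_)) (hMcol ⟨j, hj⟩)
      simp [hDdef, hj, i.isLt]
    · refine le_trans (le_of_eq (Finset.sum_eq_zero fun i hi => ?_)) zero_le_one
      simp [hDdef, hj]
  have hs'mono : ∀ k, s' (k+1) ≤ s' k := by
    intro k
    rw [hs'def]; dsimp only
    split
    · rename_i h1
      have hk : k < p := by omega
      rw [dif_pos hk]
      exact hs (by simp [Fin.le_def])
    · split
      · rename_i _ h2; exact hs0 _
      · exact le_refl 0
  have ht'mono : ∀ k, t' (k+1) ≤ t' k := by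
    intro k
    rw [ht'def]; dsimp only
    split
    · rename_i h1
      have hk : k < p := by omega
      rw [dif_pos hk]
      exact ht (by simp [Fin.le_def])
    · split
      · rename_i _ h2; exact ht0 _
      · exact le_refl 0
  have hs'p : s' p = 0 := by simp [hs'def]
  have ht'p : t' p = 0 := by simp [ht'def]
  have key := vn_substoch p D s' t' hD0 hDrow hDcol hs'mono hs'p ht'mono ht'p
  calc finner X Y = ∑ j : Fin p, ∑ c : Fin p, s j * t c * M j c := hfin
    _ ≤ ∑ j : Fin p, ∑ c : Fin p, s j * t c * |M j c| := by
        refine Finset.sum_le_sum fun j _ => Finset.sum_le_sum fun c _ => ?_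
        exact mul_le_mul_of_nonneg_left (le_abs_self _) (mul_nonneg (hs0 j) (ht0 c))
    _ = ∑ i ∈ Finset.range p, ∑ j ∈ Finset.range p, D i j * s' i * t' j := by
        rw [← Fin.sum_univ_eq_sum_range (fun i => ∑ j ∈ Finset.range p, D i j * s' i * t' j) p]
        refine Finset.sum_congr rfl fun j _ => ?_
        rw [← Fin.sum_univ_eq_sum_range (fun l => D j l * s' j * t' l) p]
        refine Finset.sum_congr rfl fun c _ => ?_
        simp only [hDdef, hs'def, ht'def]
        rw [dif_pos (And.intro j.isLt c.isLt), dif_pos j.isLt, dif_pos c.isLt]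
        simp only [Fin.eta]
        ring
    _ ≤ ∑ i ∈ Finset.range p, s' i * t' i := key
    _ = ∑ j : Fin p, s j * t j := by
        rw [← Fin.sum_univ_eq_sum_range (fun i => s' i * t' i) p]
        refine Finset.sum_congr rfl fun j _ => ?_
        simp [hs'def, ht'def, j.isLt]
end

section
/- If X̄, X̂ ∈ R^{n×p} are simultaneously polarizable (some U with UᵀU = I_p satisfies X̄Uᵀ, X̂Uᵀ ⪰ 0) and ‖X̄‖_* = ‖X̂‖_*, then the nuclear norm is constant on the segment [X̄, X̂]: ‖tX̂ + (1−t)X̄‖_* = ‖X̄‖_* for all t ∈ [0,1]. -/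
open Matrix

lemma psd_smul {n : ℕ} {A : Matrix (Fin n) (Fin n) ℝ} (hA : A.PosSemidef)
    {c : ℝ} (hc : 0 ≤ c) : (c • A).PosSemidef := by
  exact hA.smul hc

lemma nuclearNorm_eq_trace {n p : ℕ} (X U : Matrix (Fin n) (Fin p) ℝ)
    (hU : Uᵀ * U = 1) (hP : (X * Uᵀ).PosSemidef) :
    nuclearNorm X = (X * Uᵀ).trace := by
  set P := X * Uᵀ with hPdef
  have hX : X = P * U := by
    rw [hPdef, Matrix.mul_assoc, hU, Matrix.mul_one]
  have hPUU : P * U * Uᵀ = P := by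
    conv_lhs => rw [← hX]
  have hPsym : Pᵀ = P := by
    have := hP.1
    rwa [IsHermitian, conjTranspose_eq_transpose_of_trivial] at this
  set S := Uᵀ * P * U with hSdef
  have hSpsd : S.PosSemidef := by
    have := hP.conjTranspose_mul_mul_same U
    rwa [conjTranspose_eq_transpose_of_trivial] at this
  have hsq : S ^ 2 = Xᴴ * X := by
    rw [conjTranspose_eq_transpose_of_trivial]
    rw [pow_two, hSdef]
    calc Uᵀ * P * U * (Uᵀ * P * U) = Uᵀ * (P * U * Uᵀ) * (P * U) := by
          simp only [Matrix.mul_assoc]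
      _ = Uᵀ * P * (P * U) := by rw [hPUU, Matrix.mul_assoc]
      _ = Xᵀ * X := by
          rw [hX, transpose_mul, hPsym]
  have hsqrt : nuclearNorm X = S.trace := by
    have hH := (Matrix.posSemidef_conjTranspose_mul_self X).1
    have e := IsHermitian.cfc_eq hH Real.sqrt
    simp only [IsHermitian.cfc, Unitary.conjStarAlgAut_apply] at e
    rw [nuclearNorm, ← e, ← hsq, ← cfc_comp_pow Real.sqrt 2 S (ha := hSpsd.1.isSelfAdjoint)]
    congr 1
    rw [cfc_congr (g := id) (a := S), cfc_id ℝ S hSpsd.1.isSelfAdjoint]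
    intro x hx
    rw [hSpsd.1.spectrum_real_eq_range_eigenvalues] at hx
    obtain ⟨i, rfl⟩ := hx
    have := hSpsd.eigenvalues_nonneg i
    simp [Real.sqrt_sq this]
  rw [hsqrt, hSdef, Matrix.mul_assoc, trace_mul_comm, Matrix.mul_assoc,
    ← Matrix.mul_assoc, hPUU]

theorem nuclearNorm_constant_on_segment {n p : ℕ}
    (Xb Xh : Matrix (Fin n) (Fin p) ℝ)
    (U : Matrix (Fin n) (Fin p) ℝ) (hU : Uᵀ * U = 1)
    (hb : (Xb * Uᵀ).PosSemidef) (hh : (Xh * Uᵀ).PosSemidef)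
    (hnorm : nuclearNorm Xb = nuclearNorm Xh) :
    ∀ t : ℝ, t ∈ Set.Icc (0 : ℝ) 1 →
      nuclearNorm (t • Xh + (1 - t) • Xb) = nuclearNorm Xb := by
  intro t ht
  obtain ⟨ht0, ht1⟩ := ht
  have hcomb : ((t • Xh + (1 - t) • Xb) * Uᵀ).PosSemidef := by
    rw [Matrix.add_mul, Matrix.smul_mul, Matrix.smul_mul]
    exact (psd_smul hh ht0).add (psd_smul hb (by linarith))
  rw [nuclearNorm_eq_trace _ U hU hcomb, nuclearNorm_eq_trace Xb U hU hb]
  rw [Matrix.add_mul, Matrix.smul_mul, Matrix.smul_mul, trace_add, trace_smul, trace_smul]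
  have h1 := nuclearNorm_eq_trace Xb U hU hb
  have h2 := nuclearNorm_eq_trace Xh U hU hh
  rw [← h1, ← h2, ← hnorm]
  simp [smul_eq_mul]; ring
end
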